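/- Let k, n, G and H be as in the context. If H has a dominating set S with M(v,S) ≤ n+1 for every vertex v of H, then there exist indices x_1, …, x_k ∈ [n] such that the vertices u_{1,x_1}, …, u_{k,x_k} are pairwise adjacent in G (a multicolored clique). -/

import Mathlib

namespace MCCRed

/-- Vertex set of a type-I gadget of order `n`: the heads `h₁, h₂`, the sets
`A = {a_1,…,a_n}` and `D = {d_1,…,d_n}`, and, for each `t ∈ [n]` and each of
the three D-gadgets `D_{a_t,d_t}`, `D_{a_t,h₁}`, `D_{d_t,h₂}` (indexed by
`Fin 3` in this order), its `n+2` private common neighbors. -/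
abbrev IVert (n : ℕ) : Type :=
  (Unit ⊕ Unit) ⊕ ((Fin n ⊕ Fin n) ⊕ (Fin n × Fin 3 × Fin (n + 2)))

/-- The head `h₁`. -/
def h1V (n : ℕ) : IVert n := Sum.inl (Sum.inl ())
/-- The head `h₂`. -/
def h2V (n : ℕ) : IVert n := Sum.inl (Sum.inr ())
/-- The vertex `a_t`. -/
def aIV (n : ℕ) (t : Fin n) : IVert n := Sum.inr (Sum.inl (Sum.inl t))
/-- The vertex `d_t`. -/
def dIV (n : ℕ) (t : Fin n) : IVert n := Sum.inr (Sum.inl (Sum.inr t))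
/-- The `s`-th private vertex of the `w`-th D-gadget at position `t`
(`w = 0`: `D_{a_t,d_t}`, `w = 1`: `D_{a_t,h₁}`, `w = 2`: `D_{d_t,h₂}`). -/
def padV (n : ℕ) (t : Fin n) (w : Fin 3) (s : Fin (n + 2)) : IVert n :=
  Sum.inr (Sum.inr (t, w, s))

/-- Adjacency-generating relation of the type-I gadget:  `h₁h₂`, `h₂` to every
`a_t`, `h₁` to every `d_t`, the heads of each D-gadget are adjacent
(`a_t d_t`, `a_t h₁`, `d_t h₂`), and each of the `n+2` private vertices of a
D-gadget is adjacent exactly to its two heads. -/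
def rI (n : ℕ) : IVert n → IVert n → Prop := fun x y =>
  (x = h1V n ∧ y = h2V n) ∨
  (∃ t, x = h2V n ∧ y = aIV n t) ∨
  (∃ t, x = h1V n ∧ y = dIV n t) ∨
  (∃ t, x = aIV n t ∧ y = dIV n t) ∨
  (∃ t, x = aIV n t ∧ y = h1V n) ∨
  (∃ t, x = dIV n t ∧ y = h2V n) ∨
  (∃ t s, x = padV n t 0 s ∧ (y = aIV n t ∨ y = dIV n t)) ∨
  (∃ t s, x = padV n t 1 s ∧ (y = aIV n t ∨ y = h1V n)) ∨
  (∃ t s, x = padV n t 2 s ∧ (y = dIV n t ∨ y = h2V n))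

/-- The type-I gadget of order `n` as a simple graph. -/
def gadgetI (n : ℕ) : SimpleGraph (IVert n) := SimpleGraph.fromRel (rI n)

/-- Vertex set of a block whose type-I gadgets are indexed by `ι`: the gadget
vertices together with `f`, `f'`, the `c_p` (`p ∈ [n+1]`) and the `b_q`
(`q ∈ [(n+1)(n+2)]`). -/
abbrev BVert (n : ℕ) (ι : Type) : Type :=
  (ι × IVert n) ⊕ ((Unit ⊕ Unit) ⊕ (Fin (n + 1) ⊕ Fin ((n + 1) * (n + 2))))

/-- The copy of gadget vertex `x` inside the gadget indexed by `g`. -/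
def gadV {n : ℕ} {ι : Type} (g : ι) (x : IVert n) : BVert n ι := Sum.inl (g, x)
/-- The block vertex `f`. -/
def fV (n : ℕ) (ι : Type) : BVert n ι := Sum.inr (Sum.inl (Sum.inl ()))
/-- The block vertex `f'`. -/
def f'V (n : ℕ) (ι : Type) : BVert n ι := Sum.inr (Sum.inl (Sum.inr ()))
/-- The block vertex `c_p`; `C'(B) = {c_1,…,c_{n+1}}`. -/
def cV (n : ℕ) (ι : Type) (p : Fin (n + 1)) : BVert n ι := Sum.inr (Sum.inr (Sum.inl p))
/-- The block vertex `b_q`. -/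
def bV (n : ℕ) (ι : Type) (q : Fin ((n + 1) * (n + 2))) : BVert n ι :=
  Sum.inr (Sum.inr (Sum.inr q))

/-- Adjacency-generating relation of a block: the gadget edges inside each
gadget, `f` adjacent to every `a_t` of every gadget, `f f'`, `f'` to each
`c_p`, and `c_p b_q` exactly when `(p-1)(n+2) < q ≤ p(n+2)` (zero-indexed:
`p(n+2) ≤ q < (p+1)(n+2)`). -/
def rB (n : ℕ) (ι : Type) : BVert n ι → BVert n ι → Prop := fun x y =>
  (∃ (g : ι) (a b : IVert n), x = gadV g a ∧ y = gadV g b ∧ rI n a b) ∨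
  (∃ (g : ι) (t : Fin n), x = fV n ι ∧ y = gadV g (aIV n t)) ∨
  (x = fV n ι ∧ y = f'V n ι) ∨
  (∃ p, x = f'V n ι ∧ y = cV n ι p) ∨
  (∃ p q, x = cV n ι p ∧ y = bV n ι q ∧
    p.val * (n + 2) ≤ q.val ∧ q.val < (p.val + 1) * (n + 2))

/-- Ordered pairs of colors `i < j`, indexing the edge-blocks and connectors. -/
abbrev Pairs (k : ℕ) : Type := {p : Fin k × Fin k // p.1 < p.2}

/-- The edges of `G` between color classes `P.1` and `P.2` (the vertex set of
`G` being `Fin k × Fin n`, with `u_{i,ℓ} = (i,ℓ)`): `e = (x,y)` encodes the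
edge `u_{i,x} u_{j,y}`. -/
abbrev EdgeIn {k n : ℕ} (G : SimpleGraph (Fin k × Fin n)) (P : Pairs k) : Type :=
  {e : Fin n × Fin n // G.Adj (P.1.1, e.1) (P.1.2, e.2)}

/-- Vertex set of `H`: the vertex-blocks `H_i` (with one gadget per `ℓ ∈ [n]`),
the edge-blocks `H_{i,j}` (with one gadget per edge in `E_{i,j}`), and for each
pair `i < j` the four connectors, encoded as `(side, kind)` with
`side = false/true` for superscript `i`/`j` and `kind = false/true` for
`r`/`s`. -/
abbrev VHmcc (k n : ℕ) (G : SimpleGraph (Fin k × Fin n)) : Type :=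
  (Fin k × BVert n (Fin n)) ⊕
    ((Σ P : Pairs k, BVert n (EdgeIn G P)) ⊕ (Pairs k × Bool × Bool))

variable {k n : ℕ}

/-- Vertex `x` of the vertex-block `H_i`. -/
def vbV (G : SimpleGraph (Fin k × Fin n)) (i : Fin k) (x : BVert n (Fin n)) :
    VHmcc k n G := Sum.inl (i, x)

/-- Vertex `x` of the edge-block `H_P`. -/
def ebV (G : SimpleGraph (Fin k × Fin n)) (P : Pairs k)
    (x : BVert n (EdgeIn G P)) : VHmcc k n G := Sum.inr (Sum.inl ⟨P, x⟩)

/-- The connector vertex of the pair `P` on side `side` of kind `kind`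
(`kind = false` is `r`, `kind = true` is `s`). -/
def connV (G : SimpleGraph (Fin k × Fin n)) (P : Pairs k) (side kind : Bool) :
    VHmcc k n G := Sum.inr (Sum.inr (P, side, kind))

/-- Adjacency-generating relation of `H`: block edges inside every vertex-block
and every edge-block, plus the connector edges. For a pair `P = (i,j)` with
`i < j`: in gadget `I_ℓ` of `H_i` the vertex `a_t` is adjacent to `s^i_P` iff
`t ≤ ℓ` and to `r^i_P` iff `ℓ ≤ t` (similarly for `H_j`); in gadget `I_e` of
`H_P` with `e = u_{i,x}u_{j,y}`, the vertex `a_t` is adjacent to `r^i_P` iff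
`t ≤ x`, to `s^i_P` iff `x ≤ t`, to `r^j_P` iff `t ≤ y` and to `s^j_P` iff
`y ≤ t`. -/
def rH (k n : ℕ) (G : SimpleGraph (Fin k × Fin n)) :
    VHmcc k n G → VHmcc k n G → Prop := fun x y =>
  (∃ (i : Fin k) (a b : BVert n (Fin n)),
    x = vbV G i a ∧ y = vbV G i b ∧ rB n (Fin n) a b) ∨
  (∃ (P : Pairs k) (a b : BVert n (EdgeIn G P)),
    x = ebV G P a ∧ y = ebV G P b ∧ rB n (EdgeIn G P) a b) ∨
  (∃ (P : Pairs k) (ℓ t : Fin n), x = vbV G P.1.1 (gadV ℓ (aIV n t)) ∧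
    ((t.val ≤ ℓ.val ∧ y = connV G P false true) ∨
     (ℓ.val ≤ t.val ∧ y = connV G P false false))) ∨
  (∃ (P : Pairs k) (ℓ t : Fin n), x = vbV G P.1.2 (gadV ℓ (aIV n t)) ∧
    ((t.val ≤ ℓ.val ∧ y = connV G P true true) ∨
     (ℓ.val ≤ t.val ∧ y = connV G P true false))) ∨
  (∃ (P : Pairs k) (e : EdgeIn G P) (t : Fin n),
    x = ebV G P (gadV e (aIV n t)) ∧
    (((t.val ≤ e.1.1.val ∧ y = connV G P false false) ∨
      (e.1.1.val ≤ t.val ∧ y = connV G P false true)) ∨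
     ((t.val ≤ e.1.2.val ∧ y = connV G P true false) ∨
      (e.1.2.val ≤ t.val ∧ y = connV G P true true))))

/-- The graph `H` output by the reduction from Multi-Colored Clique. -/
def Hmcc (k n : ℕ) (G : SimpleGraph (Fin k × Fin n)) :
    SimpleGraph (VHmcc k n G) := SimpleGraph.fromRel (rH k n G)

/-- `S` is a dominating set. -/
def IsDom {W : Type*} (H : SimpleGraph W) (S : Set W) : Prop :=
  ∀ v, v ∈ S ∨ ∃ u ∈ S, H.Adj v u

/-- Every vertex has membership `M(v,S) = |N[v] ∩ S|` at most `b`. -/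
def MembLE {W : Type*} (H : SimpleGraph W) (S : Set W) (b : ℕ) : Prop :=
  ∀ v, ((insert v (H.neighborSet v)) ∩ S).ncard ≤ b

/-- A path decomposition of `H` with bags `X_1, …, X_m`: every vertex is in
some bag, every edge is inside some bag, and the bags containing a given
vertex are consecutive. -/
def IsPathDecomp {W : Type*} (H : SimpleGraph W) (m : ℕ) (bags : Fin m → Set W) : Prop :=
  (∀ v, ∃ i, v ∈ bags i) ∧
  (∀ u v, H.Adj u v → ∃ i, u ∈ bags i ∧ v ∈ bags i) ∧
  (∀ (v : W) (i j l : Fin m), i ≤ j → j ≤ l → v ∈ bags i → v ∈ bags l → v ∈ bags j)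

end MCCRed

namespace MCCRed
variable {n : ℕ} {ι : Type}

lemma rB_pad_inv {g : ι} {t : Fin n} {w : Fin 3} {s : Fin (n+2)} {y : BVert n ι}
    (h : rB n ι (gadV g (padV n t w s)) y ∨ rB n ι y (gadV g (padV n t w s))) :
    (w = 0 ∧ (y = gadV g (aIV n t) ∨ y = gadV g (dIV n t))) ∨
    (w = 1 ∧ (y = gadV g (aIV n t) ∨ y = gadV g (h1V n))) ∨
    (w = 2 ∧ (y = gadV g (dIV n t) ∨ y = gadV g (h2V n))) := by
  rcases h with h | h <;>
    simp only [rB, rI, gadV, padV, fV, f'V, cV, bV, h1V, h2V, aIV, dIV,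
      Sum.inl.injEq, Sum.inr.injEq, Prod.mk.injEq, reduceCtorEq, false_and, and_false,
      exists_false, exists_and_left, exists_and_right, exists_eq_left, exists_eq_right,
      false_or, or_false, exists_eq_left'] at h <;>
    aesop

lemma rB_b_inv {q : Fin ((n+1)*(n+2))} {y : BVert n ι}
    (h : rB n ι (bV n ι q) y ∨ rB n ι y (bV n ι q)) :
    ∃ p : Fin (n+1), y = cV n ι p ∧ p.val*(n+2) ≤ q.val ∧ q.val < (p.val+1)*(n+2) := by
  rcases h with h | h <;>
    simp only [rB, rI, gadV, padV, fV, f'V, cV, bV, h1V, h2V, aIV, dIV,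
      Sum.inl.injEq, Sum.inr.injEq, Prod.mk.injEq, reduceCtorEq, false_and, and_false,
      exists_false, false_or, or_false] at h <;>
    aesop

lemma rB_f_inv {y : BVert n ι}
    (h : rB n ι (fV n ι) y ∨ rB n ι y (fV n ι)) :
    (∃ (g : ι) (t : Fin n), y = gadV g (aIV n t)) ∨ y = f'V n ι := by
  rcases h with h | h <;>
    simp only [rB, rI, gadV, padV, fV, f'V, cV, bV, h1V, h2V, aIV, dIV,
      Sum.inl.injEq, Sum.inr.injEq, Prod.mk.injEq, reduceCtorEq, false_and, and_false,
      exists_false, false_or, or_false] at h <;>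
    aesop
variable {k n : ℕ} {ι : Type} {W : Type*}

structure IsBlock (H : SimpleGraph W) (φ : BVert n ι → W) : Prop where
  inj : Function.Injective φ
  fwd : ∀ ⦃x y : BVert n ι⦄, rB n ι x y → x ≠ y → H.Adj (φ x) (φ y)
  bwd : ∀ ⦃x : BVert n ι⦄ ⦃u : W⦄, H.Adj (φ x) u → (∀ g t, x ≠ gadV g (aIV n t)) →
    ∃ y, (rB n ι x y ∨ rB n ι y x) ∧ u = φ y

lemma isBlock_vb (G : SimpleGraph (Fin k × Fin n)) (i : Fin k) :
    IsBlock (Hmcc k n G) (vbV G i) where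
  inj := by intro a b h; simpa [vbV] using h
  fwd := by
    intro x y hr hne
    exact ⟨by simpa [vbV] using hne, Or.inl (Or.inl ⟨i, x, y, rfl, rfl, hr⟩)⟩
  bwd := by
    intro x u hadj hxa
    rw [Hmcc, SimpleGraph.fromRel_adj] at hadj
    obtain ⟨-, h | h⟩ := hadj <;>
      simp only [rH, vbV, ebV, connV, gadV, Sum.inl.injEq, Sum.inr.injEq, Prod.mk.injEq,
        reduceCtorEq, false_and, and_false, exists_false, false_or, or_false] at h
    · rcases h with ⟨i', a, b, ⟨rfl, rfl⟩, rfl, hr⟩ | ⟨P, ℓ, t, ⟨_, hx⟩, _⟩ |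
        ⟨P, ℓ, t, ⟨_, hx⟩, _⟩
      · exact ⟨b, Or.inl hr, rfl⟩
      · exact absurd hx (hxa ℓ t)
      · exact absurd hx (hxa ℓ t)
    · obtain ⟨i', a, b, rfl, ⟨rfl, rfl⟩, hr⟩ := h
      exact ⟨a, Or.inr hr, rfl⟩

lemma isBlock_eb (G : SimpleGraph (Fin k × Fin n)) (P : Pairs k) :
    IsBlock (Hmcc k n G) (ebV G P) where
  inj := by intro a b h; simpa [ebV] using h
  fwd := by
    intro x y hr hne
    exact ⟨by simpa [ebV] using hne, Or.inl (Or.inr (Or.inl ⟨P, x, y, rfl, rfl, hr⟩))⟩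
  bwd := by
    intro x u hadj hxa
    rw [Hmcc, SimpleGraph.fromRel_adj] at hadj
    obtain ⟨-, h | h⟩ := hadj <;>
      simp only [rH, vbV, ebV, connV, gadV, Sum.inl.injEq, Sum.inr.injEq, Prod.mk.injEq,
        Sigma.mk.inj_iff, reduceCtorEq, false_and, and_false, exists_false, false_or,
        or_false] at h
    · rcases h with ⟨P', a, b, ⟨rfl, ha⟩, rfl, hr⟩ | ⟨P', e, t, ⟨rfl, hx⟩, _⟩
      · obtain rfl := eq_of_heq ha
        exact ⟨b, Or.inl hr, rfl⟩
      · exact absurd (eq_of_heq hx) (hxa e t)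
    · obtain ⟨P', a, b, rfl, ⟨rfl, hb⟩, hr⟩ := h
      obtain rfl := eq_of_heq hb
      exact ⟨a, Or.inr hr, rfl⟩
variable {k n : ℕ} {ι : Type} {W : Type*}

lemma card_le_of_inj [Finite W] {T : Set W} {m : ℕ} (f : Fin m → W)
    (hinj : Function.Injective f) (hsub : ∀ t, f t ∈ T) : m ≤ T.ncard := by
  have h1 : (Set.range f).ncard = m := by
    rw [← Nat.card_coe_set_eq, Nat.card_range_of_injective hinj, Nat.card_eq_fintype_card,
      Fintype.card_fin]
  calc m = (Set.range f).ncard := h1.symm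
    _ ≤ T.ncard := Set.ncard_le_ncard (Set.range_subset_iff.2 hsub) (Set.toFinite T)

lemma memb_lower [Finite W] {H : SimpleGraph W} {S : Set W} {b : ℕ}
    (hm : MembLE H S b) (v : W) {m : ℕ} {f : Fin m → W} (hinj : Function.Injective f)
    (hS : ∀ s, f s ∈ S) (hN : ∀ s, f s = v ∨ H.Adj v (f s)) : m ≤ b := by
  refine le_trans (card_le_of_inj f hinj ?_) (hm v)
  intro t
  exact ⟨Set.mem_insert_iff.2 (hN t), hS t⟩

lemma bidx_lt (p : Fin (n+1)) (s : Fin (n+2)) : p.val*(n+2)+s.val < (n+1)*(n+2) := by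
  have h1 : p.val*(n+2)+s.val < (p.val+1)*(n+2) := by rw [add_mul, one_mul]; omega
  exact lt_of_lt_of_le h1 (Nat.mul_le_mul_right _ (by omega))

lemma interval_eq {m p p' q : ℕ} (h1 : p*m ≤ q) (h2 : q < (p+1)*m) (h3 : p'*m ≤ q)
    (h4 : q < (p'+1)*m) : p' = p := by
  rcases Nat.lt_trichotomy p' p with h | h | h
  · exact absurd (Nat.mul_le_mul_right m (by omega : p'+1 ≤ p)) (by omega)
  · exact h
  · exact absurd (Nat.mul_le_mul_right m (by omega : p+1 ≤ p')) (by omega)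

lemma block_full [Finite W] {H : SimpleGraph W} {S : Set W}
    (hd : IsDom H S) (hm : MembLE H S (n+1)) {φ : BVert n ι → W} (hb : IsBlock H φ) :
    ∃ g : ι, ∀ t : Fin n, φ (gadV g (aIV n t)) ∈ S := by
  classical
  have priv : ∀ (u v : W) (p : Fin (n+2) → W), Function.Injective p →
      (∀ s, H.Adj u (p s)) → (∀ s w', H.Adj (p s) w' → w' = u ∨ w' = v) →
      u ∉ S → v ∉ S → False := by
    intro u v p hinj hadj hnbr hu hv
    have hpS : ∀ s, p s ∈ S := by
      intro s
      rcases hd (p s) with h | ⟨w', hw', ha⟩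
      · exact h
      · rcases hnbr s w' ha with rfl | rfl <;> simp_all
    have := memb_lower hm u hinj hpS (fun s => Or.inr (hadj s))
    omega
  have adjI : ∀ (g : ι) (a b : IVert n), rI n a b → a ≠ b →
      H.Adj (φ (gadV g a)) (φ (gadV g b)) := by
    intro g a b hr hne
    exact hb.fwd (Or.inl ⟨g, a, b, rfl, rfl, hr⟩) (by simp [gadV, hne])
  -- all c_p in S
  have hc : ∀ p : Fin (n+1), φ (cV n ι p) ∈ S := by
    intro p
    by_contra hcp
    refine priv (φ (cV n ι p)) (φ (cV n ι p))
      (fun s => φ (bV n ι ⟨p.val*(n+2)+s.val, bidx_lt p s⟩)) ?_ ?_ ?_ hcp hcp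
    · intro s s' h
      rw [hb.inj.eq_iff] at h
      simp only [bV, Sum.inr.injEq, Fin.mk.injEq] at h
      exact Fin.ext (by omega)
    · intro s
      refine hb.fwd (Or.inr (Or.inr (Or.inr (Or.inr
        ⟨p, ⟨p.val*(n+2)+s.val, bidx_lt p s⟩, rfl, rfl, ?_, ?_⟩)))) (by simp [cV, bV])
      · simp
      · simp only [add_mul, one_mul]; omega
    · intro s w' ha
      obtain ⟨y, hy, rfl⟩ := hb.bwd ha (by simp [bV, gadV])
      obtain ⟨p', rfl, h1, h2⟩ := rB_b_inv hy
      have : p' = p := Fin.ext (interval_eq (Nat.le_add_right _ _)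
        (by simp only [add_mul, one_mul]; omega) h1 h2)
      exact Or.inl (by rw [this])
  have adj_fc : ∀ p, H.Adj (φ (f'V n ι)) (φ (cV n ι p)) := fun p =>
    hb.fwd (Or.inr (Or.inr (Or.inr (Or.inl ⟨p, rfl, rfl⟩)))) (by simp [f'V, cV])
  have adj_ff' : H.Adj (φ (fV n ι)) (φ (f'V n ι)) :=
    hb.fwd (Or.inr (Or.inr (Or.inl ⟨rfl, rfl⟩))) (by simp [fV, f'V])
  have notS : ∀ z : BVert n ι, (φ z = φ (f'V n ι) ∨ H.Adj (φ (f'V n ι)) (φ z)) →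
      (∀ p : Fin (n+1), z ≠ cV n ι p) → φ z ∉ S := by
    intro z hznbr hzc hzS
    have hle := memb_lower hm (φ (f'V n ι))
      (f := fun s : Fin (n+2) => if h : s.val < n+1 then φ (cV n ι ⟨s.val, h⟩) else φ z)
      ?_ ?_ ?_
    · omega
    · intro s s' h
      by_cases h1 : s.val < n+1 <;> by_cases h2 : s'.val < n+1 <;>
        simp only [h1, h2, dif_pos, dif_neg, not_false_iff, dite_true, dite_false] at h
      · rw [hb.inj.eq_iff] at h
        simp only [cV, Sum.inr.injEq, Sum.inl.injEq, Fin.mk.injEq] at h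
        exact Fin.ext h
      · exact absurd (hb.inj h).symm (hzc _)
      · exact absurd (hb.inj h) (hzc _)
      · exact Fin.ext (by omega)
    · intro s
      by_cases h1 : s.val < n+1 <;>
        simp only [h1, dif_pos, dif_neg, not_false_iff, dite_true, dite_false]
      · exact hc _
      · exact hzS
    · intro s
      by_cases h1 : s.val < n+1 <;>
        simp only [h1, dif_pos, dif_neg, not_false_iff, dite_true, dite_false]
      · exact Or.inr (adj_fc _)
      · rcases hznbr with h | h
        · exact Or.inl h
        · exact Or.inr h
  have hf' : φ (f'V n ι) ∉ S := notS _ (Or.inl rfl) (by simp [f'V, cV])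
  have hf : φ (fV n ι) ∉ S := notS _ (Or.inr adj_ff'.symm) (by simp [fV, cV])
  obtain ⟨g0, t0, ha0⟩ : ∃ g t, φ (gadV g (aIV n t)) ∈ S := by
    rcases hd (φ (fV n ι)) with h | ⟨u, huS, hadj⟩
    · exact absurd h hf
    · obtain ⟨y, hy, rfl⟩ := hb.bwd hadj (by simp [fV, gadV])
      rcases rB_f_inv hy with ⟨g, t, rfl⟩ | rfl
      · exact ⟨g, t, huS⟩
      · exact absurd huS hf'
  -- D-gadget pair lemmas
  have pairAD : ∀ (g : ι) (t : Fin n),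
      φ (gadV g (aIV n t)) ∈ S ∨ φ (gadV g (dIV n t)) ∈ S := by
    intro g t
    by_contra hcon
    push_neg at hcon
    refine priv _ _ (fun s => φ (gadV g (padV n t 0 s))) ?_ ?_ ?_ hcon.1 hcon.2
    · intro s s' h
      rw [hb.inj.eq_iff] at h
      simpa [gadV, padV] using h
    · intro s
      exact (adjI g _ _ (Or.inr (Or.inr (Or.inr (Or.inr (Or.inr (Or.inr (Or.inl
        ⟨t, s, rfl, Or.inl rfl⟩)))))) ) (by simp [padV, aIV])).symm
    · intro s w' ha
      obtain ⟨y, hy, rfl⟩ := hb.bwd ha (by simp [gadV, padV, aIV])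
      rcases rB_pad_inv hy with ⟨_, h⟩ | ⟨hw, _⟩ | ⟨hw, _⟩
      · rcases h with rfl | rfl
        exacts [Or.inl rfl, Or.inr rfl]
      · exact absurd hw (by decide)
      · exact absurd hw (by decide)
  have pairAH : ∀ (g : ι) (t : Fin n),
      φ (gadV g (aIV n t)) ∈ S ∨ φ (gadV g (h1V n)) ∈ S := by
    intro g t
    by_contra hcon
    push_neg at hcon
    refine priv _ _ (fun s => φ (gadV g (padV n t 1 s))) ?_ ?_ ?_ hcon.1 hcon.2
    · intro s s' h
      rw [hb.inj.eq_iff] at h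
      simpa [gadV, padV] using h
    · intro s
      exact (adjI g _ _ (Or.inr (Or.inr (Or.inr (Or.inr (Or.inr (Or.inr (Or.inr (Or.inl
        ⟨t, s, rfl, Or.inl rfl⟩)))))) ) ) (by simp [padV, aIV])).symm
    · intro s w' ha
      obtain ⟨y, hy, rfl⟩ := hb.bwd ha (by simp [gadV, padV, aIV])
      rcases rB_pad_inv hy with ⟨hw, _⟩ | ⟨_, h⟩ | ⟨hw, _⟩
      · exact absurd hw (by decide)
      · rcases h with rfl | rfl
        exacts [Or.inl rfl, Or.inr rfl]
      · exact absurd hw (by decide)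
  have pairDH : ∀ (g : ι) (t : Fin n),
      φ (gadV g (dIV n t)) ∈ S ∨ φ (gadV g (h2V n)) ∈ S := by
    intro g t
    by_contra hcon
    push_neg at hcon
    refine priv _ _ (fun s => φ (gadV g (padV n t 2 s))) ?_ ?_ ?_ hcon.1 hcon.2
    · intro s s' h
      rw [hb.inj.eq_iff] at h
      simpa [gadV, padV] using h
    · intro s
      exact (adjI g _ _ (Or.inr (Or.inr (Or.inr (Or.inr (Or.inr (Or.inr (Or.inr (Or.inr
        ⟨t, s, rfl, Or.inl rfl⟩)))))) ) ) (by simp [padV, dIV])).symm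
    · intro s w' ha
      obtain ⟨y, hy, rfl⟩ := hb.bwd ha (by simp [gadV, padV, dIV, aIV])
      rcases rB_pad_inv hy with ⟨hw, _⟩ | ⟨hw, _⟩ | ⟨_, h⟩
      · exact absurd hw (by decide)
      · exact absurd hw (by decide)
      · rcases h with rfl | rfl
        exacts [Or.inl rfl, Or.inr rfl]
  -- h1 of gadget g0 is not in S
  have hh1 : φ (gadV g0 (h1V n)) ∉ S := by
    intro hh1
    by_cases hh2 : φ (gadV g0 (h2V n)) ∈ S
    · set E : Fin n → IVert n :=
        fun t' => if φ (gadV g0 (aIV n t')) ∈ S then aIV n t' else dIV n t' with hE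
      have hEad : ∀ t', E t' = aIV n t' ∨ E t' = dIV n t' := by
        intro t'; rw [hE]; dsimp only; split
        exacts [Or.inl rfl, Or.inr rfl]
      have hES : ∀ t', φ (gadV g0 (E t')) ∈ S := by
        intro t'; rw [hE]; dsimp only; split
        · assumption
        · exact (pairAD g0 t').resolve_left ‹_›
      have hEadj : ∀ t', H.Adj (φ (gadV g0 (h1V n))) (φ (gadV g0 (E t'))) := by
        intro t'; rw [hE]; dsimp only; split
        · exact (adjI g0 _ _ (Or.inr (Or.inr (Or.inr (Or.inr (Or.inl ⟨t', rfl, rfl⟩)))))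
            (by simp [aIV, h1V])).symm
        · exact adjI g0 _ _ (Or.inr (Or.inr (Or.inl ⟨t', rfl, rfl⟩))) (by simp [dIV, h1V])
      have hEinj : ∀ t1 t2, E t1 = E t2 → t1 = t2 := by
        intro t1 t2 h
        rcases hEad t1 with h1 | h1 <;> rcases hEad t2 with h2 | h2 <;>
          rw [h1, h2] at h <;> simp only [aIV, dIV, Sum.inr.injEq, Sum.inl.injEq,
            reduceCtorEq] at h <;> first | exact h | exact h.elim
      have hEne1 : ∀ t', E t' ≠ h1V n := by
        intro t'
        rcases hEad t' with h1 | h1 <;> rw [h1] <;> simp [aIV, dIV, h1V]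
      have hEne2 : ∀ t', E t' ≠ h2V n := by
        intro t'
        rcases hEad t' with h1 | h1 <;> rw [h1] <;> simp [aIV, dIV, h2V]
      set F : Fin (n+2) → IVert n := fun s =>
        if h : 2 ≤ s.val then E ⟨s.val-2, by omega⟩
        else if s.val = 0 then h1V n else h2V n with hF
      have hFspec : ∀ s : Fin (n+2), (s.val = 0 ∧ F s = h1V n) ∨ (s.val = 1 ∧ F s = h2V n) ∨
          (∃ h : 2 ≤ s.val, F s = E ⟨s.val-2, by omega⟩) := by
        intro s
        rcases Nat.lt_or_ge s.val 2 with h2 | h2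
        · rcases Nat.lt_or_ge s.val 1 with h1 | h1
          · exact Or.inl ⟨by omega, by
              rw [hF]; dsimp only; rw [dif_neg (by omega), if_pos (by omega)]⟩
          · exact Or.inr (Or.inl ⟨by omega, by
              rw [hF]; dsimp only; rw [dif_neg (by omega), if_neg (by omega)]⟩)
        · exact Or.inr (Or.inr ⟨h2, by rw [hF]; dsimp only; rw [dif_pos h2]⟩)
      have hle := memb_lower hm (φ (gadV g0 (h1V n)))
        (f := fun s : Fin (n+2) => φ (gadV g0 (F s))) ?_ ?_ ?_
      · omega
      · intro s s' h
        have hFF : F s = F s' := by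
          have := hb.inj h
          simpa [gadV] using this
        rcases hFspec s with ⟨e1, q1⟩ | ⟨e1, q1⟩ | ⟨e1, q1⟩ <;>
          rcases hFspec s' with ⟨e2, q2⟩ | ⟨e2, q2⟩ | ⟨e2, q2⟩ <;>
          rw [q1, q2] at hFF
        · exact Fin.ext (by omega)
        · exact absurd hFF (by simp [h1V, h2V])
        · exact absurd hFF.symm (hEne1 _)
        · exact absurd hFF.symm (by simp [h1V, h2V])
        · exact Fin.ext (by omega)
        · exact absurd hFF.symm (hEne2 _)
        · exact absurd hFF (hEne1 _)
        · exact absurd hFF (hEne2 _)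
        · have := hEinj _ _ hFF
          simp only [Fin.mk.injEq] at this
          exact Fin.ext (by omega)
      · intro s
        rcases hFspec s with ⟨e1, q1⟩ | ⟨e1, q1⟩ | ⟨e1, q1⟩ <;> rw [q1]
        exacts [hh1, hh2, hES _]
      · intro s
        rcases hFspec s with ⟨e1, q1⟩ | ⟨e1, q1⟩ | ⟨e1, q1⟩ <;> rw [q1]
        · exact Or.inl rfl
        · exact Or.inr (adjI g0 _ _ (Or.inl ⟨rfl, rfl⟩) (by simp [h1V, h2V]))
        · exact Or.inr (hEadj _)
    · have hdS : ∀ t', φ (gadV g0 (dIV n t')) ∈ S :=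
        fun t' => (pairDH g0 t').resolve_right hh2
      set F : Fin (n+2) → IVert n := fun s =>
        if h : 2 ≤ s.val then dIV n ⟨s.val-2, by omega⟩
        else if s.val = 0 then h1V n else aIV n t0 with hF
      have hFspec : ∀ s : Fin (n+2), (s.val = 0 ∧ F s = h1V n) ∨ (s.val = 1 ∧ F s = aIV n t0) ∨
          (∃ h : 2 ≤ s.val, F s = dIV n ⟨s.val-2, by omega⟩) := by
        intro s
        rcases Nat.lt_or_ge s.val 2 with h2 | h2
        · rcases Nat.lt_or_ge s.val 1 with h1 | h1
          · exact Or.inl ⟨by omega, by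
              rw [hF]; dsimp only; rw [dif_neg (by omega), if_pos (by omega)]⟩
          · exact Or.inr (Or.inl ⟨by omega, by
              rw [hF]; dsimp only; rw [dif_neg (by omega), if_neg (by omega)]⟩)
        · exact Or.inr (Or.inr ⟨h2, by rw [hF]; dsimp only; rw [dif_pos h2]⟩)
      have hle := memb_lower hm (φ (gadV g0 (h1V n)))
        (f := fun s : Fin (n+2) => φ (gadV g0 (F s))) ?_ ?_ ?_
      · omega
      · intro s s' h
        have hFF : F s = F s' := by
          have := hb.inj h
          simpa [gadV] using this
        rcases hFspec s with ⟨e1, q1⟩ | ⟨e1, q1⟩ | ⟨e1, q1⟩ <;>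
          rcases hFspec s' with ⟨e2, q2⟩ | ⟨e2, q2⟩ | ⟨e2, q2⟩ <;>
          rw [q1, q2] at hFF
        · exact Fin.ext (by omega)
        · exact absurd hFF (by simp [h1V, aIV])
        · exact absurd hFF (by simp [h1V, dIV])
        · exact absurd hFF (by simp [h1V, aIV])
        · exact Fin.ext (by omega)
        · exact absurd hFF (by simp [aIV, dIV])
        · exact absurd hFF (by simp [h1V, dIV])
        · exact absurd hFF (by simp [aIV, dIV])
        · simp only [dIV, Sum.inr.injEq, Sum.inl.injEq, Fin.mk.injEq] at hFF
          exact Fin.ext (by omega)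
      · intro s
        rcases hFspec s with ⟨e1, q1⟩ | ⟨e1, q1⟩ | ⟨e1, q1⟩ <;> rw [q1]
        exacts [hh1, ha0, hdS _]
      · intro s
        rcases hFspec s with ⟨e1, q1⟩ | ⟨e1, q1⟩ | ⟨e1, q1⟩ <;> rw [q1]
        · exact Or.inl rfl
        · exact Or.inr (adjI g0 _ _ (Or.inr (Or.inr (Or.inr (Or.inr (Or.inl
            ⟨t0, rfl, rfl⟩))))) (by simp [aIV, h1V])).symm
        · exact Or.inr (adjI g0 _ _ (Or.inr (Or.inr (Or.inl ⟨_, rfl, rfl⟩)))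
            (by simp [dIV, h1V]))
  refine ⟨g0, fun t => (pairAH g0 t).resolve_right hh1⟩
variable {k n : ℕ} {W : Type*}

lemma two_fam [Finite W] {H : SimpleGraph W} {S : Set W} {b : ℕ}
    (hm : MembLE H S b) (v : W) {m1 m2 : ℕ} (f1 : Fin m1 → W) (f2 : Fin m2 → W)
    (hinj1 : Function.Injective f1) (hinj2 : Function.Injective f2)
    (hdisj : ∀ s t, f1 s ≠ f2 t) (hS1 : ∀ s, f1 s ∈ S) (hS2 : ∀ s, f2 s ∈ S)
    (hN1 : ∀ s, H.Adj v (f1 s)) (hN2 : ∀ s, H.Adj v (f2 s)) : m1 + m2 ≤ b := by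
  refine memb_lower hm v (f := fun s : Fin (m1+m2) =>
    if h : s.val < m1 then f1 ⟨s.val, h⟩ else f2 ⟨s.val - m1, by omega⟩) ?_ ?_ ?_
  · intro s s' h
    by_cases h1 : s.val < m1 <;> by_cases h2 : s'.val < m1 <;>
      simp only [h1, h2, dif_pos, dif_neg, not_false_iff, dite_true, dite_false] at h
    · have := hinj1 h; simp only [Fin.mk.injEq] at this; exact Fin.ext this
    · exact absurd h (hdisj _ _)
    · exact absurd h.symm (hdisj _ _)
    · have := hinj2 h; simp only [Fin.mk.injEq] at this; exact Fin.ext (by omega)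
  · intro s
    by_cases h1 : s.val < m1 <;>
      simp only [h1, dif_pos, dif_neg, not_false_iff, dite_true, dite_false]
    exacts [hS1 _, hS2 _]
  · intro s
    by_cases h1 : s.val < m1 <;>
      simp only [h1, dif_pos, dif_neg, not_false_iff, dite_true, dite_false]
    exacts [Or.inr (hN1 _), Or.inr (hN2 _)]

variable {G : SimpleGraph (Fin k × Fin n)}

lemma adj_vb_conn (P : Pairs k) (ℓ t : Fin n) {side kind : Bool}
    (h : (kind = true ∧ t.val ≤ ℓ.val) ∨ (kind = false ∧ ℓ.val ≤ t.val)) :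
    (Hmcc k n G).Adj (connV G P side kind)
      (vbV G (if side then P.1.2 else P.1.1) (gadV ℓ (aIV n t))) := by
  refine SimpleGraph.Adj.symm ⟨by simp [vbV, connV], ?_⟩
  cases side
  · refine Or.inl (Or.inr (Or.inr (Or.inl ⟨P, ℓ, t, rfl, ?_⟩)))
    rcases h with ⟨rfl, h⟩ | ⟨rfl, h⟩
    exacts [Or.inl ⟨h, rfl⟩, Or.inr ⟨h, rfl⟩]
  · refine Or.inl (Or.inr (Or.inr (Or.inr (Or.inl ⟨P, ℓ, t, rfl, ?_⟩))))
    rcases h with ⟨rfl, h⟩ | ⟨rfl, h⟩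
    exacts [Or.inl ⟨h, rfl⟩, Or.inr ⟨h, rfl⟩]

lemma adj_eb_conn (P : Pairs k) (e : EdgeIn G P) (t : Fin n) {side kind : Bool}
    (h : (side = false ∧ ((kind = false ∧ t.val ≤ e.1.1.val) ∨ (kind = true ∧ e.1.1.val ≤ t.val)))
      ∨ (side = true ∧ ((kind = false ∧ t.val ≤ e.1.2.val) ∨ (kind = true ∧ e.1.2.val ≤ t.val)))) :
    (Hmcc k n G).Adj (connV G P side kind) (ebV G P (gadV e (aIV n t))) := by
  refine SimpleGraph.Adj.symm ⟨by simp [ebV, connV], ?_⟩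
  refine Or.inl (Or.inr (Or.inr (Or.inr (Or.inr ⟨P, e, t, rfl, ?_⟩))))
  rcases h with ⟨rfl, ⟨rfl, h⟩ | ⟨rfl, h⟩⟩ | ⟨rfl, ⟨rfl, h⟩ | ⟨rfl, h⟩⟩
  exacts [Or.inl (Or.inl ⟨h, rfl⟩), Or.inl (Or.inr ⟨h, rfl⟩),
    Or.inr (Or.inl ⟨h, rfl⟩), Or.inr (Or.inr ⟨h, rfl⟩)]
end MCCRed

open MCCRed in
theorem stmt_13 (k n : ℕ) (hk : 2 ≤ k) (hn : 1 ≤ n)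
    (G : SimpleGraph (Fin k × Fin n))
    (hmds : ∃ S : Set (VHmcc k n G),
      IsDom (Hmcc k n G) S ∧ MembLE (Hmcc k n G) S (n + 1)) :
    ∃ x : Fin k → Fin n, ∀ i j : Fin k, i ≠ j → G.Adj (i, x i) (j, x j) := by
  classical
  obtain ⟨S, hd, hm⟩ := hmds
  haveI : Finite (VHmcc k n G) := by infer_instance
  choose x hx using fun i : Fin k => block_full hd hm (isBlock_vb G i)
  choose e he using fun P : Pairs k => block_full hd hm (isBlock_eb G P)
  have key : ∀ (P : Pairs k) (side : Bool),
      (if side then (e P).1.2 else (e P).1.1) = x (if side then P.1.2 else P.1.1) := by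
    intro P side
    set i := if side then P.1.2 else P.1.1 with hi
    set ev : Fin n := if side then (e P).1.2 else (e P).1.1 with hev
    have hbound1 : (x i).val < n := (x i).isLt
    have hbound2 : ev.val < n := ev.isLt
    have h1 : (x i).val + 1 + (n - ev.val) ≤ n + 1 := by
      refine two_fam hm (connV G P side true)
        (f1 := fun s : Fin ((x i).val + 1) => vbV G i (gadV (x i) (aIV n ⟨s.val, by omega⟩)))
        (f2 := fun s : Fin (n - ev.val) => ebV G P (gadV (e P) (aIV n ⟨ev.val + s.val, by omega⟩)))
        ?_ ?_ ?_ ?_ ?_ ?_ ?_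
      · intro s s' hh
        simp only [vbV, gadV, aIV, Sum.inl.injEq, Prod.mk.injEq, Sum.inr.injEq,
          Fin.mk.injEq, true_and, and_true] at hh
        exact Fin.ext (by omega)
      · intro s s' hh
        simp only [ebV, gadV, aIV, Sum.inr.injEq, Sum.inl.injEq, Sigma.mk.inj_iff,
          heq_eq_eq, Prod.mk.injEq, Fin.mk.injEq, true_and, and_true] at hh
        exact Fin.ext (by omega)
      · intro s s'
        simp [vbV, ebV]
      · intro s; exact hx i _
      · intro s; exact he P _
      · intro s
        have := adj_vb_conn (G := G) P (x i) ⟨s.val, by omega⟩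
          (side := side) (kind := true) (Or.inl ⟨rfl, by simpa using Nat.lt_succ_iff.1 s.isLt⟩)
        rwa [← hi] at this
      · intro s
        refine adj_eb_conn P (e P) ⟨ev.val + s.val, by omega⟩ (side := side) (kind := true) ?_
        cases side
        · refine Or.inl ⟨rfl, Or.inr ⟨rfl, ?_⟩⟩
          show (e P).1.1.val ≤ ev.val + s.val
          have hv : ev = (e P).1.1 := by rw [hev]; simp
          have hv' : ev.val = (e P).1.1.val := congrArg Fin.val hv
          omega
        · refine Or.inr ⟨rfl, Or.inr ⟨rfl, ?_⟩⟩
          show (e P).1.2.val ≤ ev.val + s.val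
          have hv : ev = (e P).1.2 := by rw [hev]; simp
          have hv' : ev.val = (e P).1.2.val := congrArg Fin.val hv
          omega
    have h2 : (n - (x i).val) + (ev.val + 1) ≤ n + 1 := by
      refine two_fam hm (connV G P side false)
        (f1 := fun s : Fin (n - (x i).val) =>
          vbV G i (gadV (x i) (aIV n ⟨(x i).val + s.val, by omega⟩)))
        (f2 := fun s : Fin (ev.val + 1) => ebV G P (gadV (e P) (aIV n ⟨s.val, by omega⟩)))
        ?_ ?_ ?_ ?_ ?_ ?_ ?_
      · intro s s' hh
        simp only [vbV, gadV, aIV, Sum.inl.injEq, Prod.mk.injEq, Sum.inr.injEq,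
          Fin.mk.injEq, true_and, and_true] at hh
        exact Fin.ext (by omega)
      · intro s s' hh
        simp only [ebV, gadV, aIV, Sum.inr.injEq, Sum.inl.injEq, Sigma.mk.inj_iff,
          heq_eq_eq, Prod.mk.injEq, Fin.mk.injEq, true_and, and_true] at hh
        exact Fin.ext (by omega)
      · intro s s'
        simp [vbV, ebV]
      · intro s; exact hx i _
      · intro s; exact he P _
      · intro s
        have := adj_vb_conn (G := G) P (x i) ⟨(x i).val + s.val, by omega⟩
          (side := side) (kind := false) (Or.inr ⟨rfl, by simp⟩)
        rwa [← hi] at this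
      · intro s
        refine adj_eb_conn P (e P) ⟨s.val, by omega⟩ (side := side) (kind := false) ?_
        cases side
        · refine Or.inl ⟨rfl, Or.inl ⟨rfl, ?_⟩⟩
          show s.val ≤ (e P).1.1.val
          have hv : ev = (e P).1.1 := by rw [hev]; simp
          have hv' : ev.val = (e P).1.1.val := congrArg Fin.val hv
          have := s.isLt
          omega
        · refine Or.inr ⟨rfl, Or.inl ⟨rfl, ?_⟩⟩
          show s.val ≤ (e P).1.2.val
          have hv : ev = (e P).1.2 := by rw [hev]; simp
          have hv' : ev.val = (e P).1.2.val := congrArg Fin.val hv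
          have := s.isLt
          omega
    exact Fin.ext (by omega)
  refine ⟨x, fun i j hij => ?_⟩
  rcases lt_or_gt_of_ne hij with h | h
  · have h2 := (e ⟨(i,j), h⟩).2
    have k1 := key ⟨(i,j), h⟩ false
    have k2 := key ⟨(i,j), h⟩ true
    simp only [if_false, if_true, Bool.false_eq_true, Bool.true_eq_false] at k1 k2
    rw [k1, k2] at h2
    exact h2
  · have h2 := (e ⟨(j,i), h⟩).2
    have k1 := key ⟨(j,i), h⟩ false
    have k2 := key ⟨(j,i), h⟩ true
    simp only [if_false, if_true, Bool.false_eq_true, Bool.true_eq_false] at k1 k2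
    rw [k1, k2] at h2
    exact h2.symm
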